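/- For a complete t-partite simple graph K_{m_1,m_2,...,m_t} with 1 ≤ m_1 ≤ m_2 ≤ ... ≤ m_t and t ≥ 2, the Roman domination number equals 2 if m_1 = 1, equals 3 if m_1 = 2, and equals 4 if m_1 ≥ 3. -/

import Mathlib

open SimpleGraph

/-- The Roman domination number: the minimum weight of a Roman dominating function,
i.e. a function `f : V → ℕ` with values in `{0,1,2}` such that every vertex with
value `0` has a neighbor with value `2`. -/
noncomputable def romanDominationNumber {V : Type*} [Fintype V] (G : SimpleGraph V) : ℕ :=
  sInf {w | ∃ f : V → ℕ, (∀ v, f v ≤ 2) ∧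
    (∀ v, f v = 0 → ∃ u, G.Adj v u ∧ f u = 2) ∧ w = ∑ v, f v}

/-- The Roman bondage number: the minimum cardinality of a set `B` of edges of `G`
whose removal increases the Roman domination number. -/
noncomputable def romanBondageNumber {V : Type*} [Fintype V] (G : SimpleGraph V) : ℕ :=
  sInf {k | ∃ B : Finset (Sym2 V), ↑B ⊆ G.edgeSet ∧ B.card = k ∧
    romanDominationNumber G < romanDominationNumber (G.deleteEdges ↑B)}

private lemma aux_card_le_sum {V : Type*} [Fintype V] (f : V → ℕ)
    (h : ∀ v : V, 1 ≤ f v) : Fintype.card V ≤ ∑ v, f v := by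
  simpa using Finset.card_nsmul_le_sum Finset.univ f 1 (fun v _ => h v)

private lemma aux_two_twos {V : Type*} [Fintype V] [DecidableEq V] (f : V → ℕ) {v x : V} (hvx : v ≠ x)
    (hv : f v = 2) (hx : f x = 2) : 4 ≤ ∑ u, f u := by
  calc (4 : ℕ) = ∑ u ∈ ({v, x} : Finset V), f u := by rw [Finset.sum_pair hvx]; omega
  _ ≤ ∑ u, f u := Finset.sum_le_sum_of_subset (Finset.subset_univ _)

private lemma aux_one_two {V : Type*} [Fintype V] (f : V → ℕ) {v : V}
    (hv : f v = 2) : 2 ≤ ∑ u, f u := by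
  calc (2 : ℕ) = f v := hv.symm
  _ ≤ ∑ u, f u := Finset.single_le_sum (fun i _ => Nat.zero_le _) (Finset.mem_univ v)

private lemma aux_erase_sum {V : Type*} [Fintype V] [DecidableEq V] (f : V → ℕ) (v : V) :
    f v + ∑ u ∈ Finset.univ.erase v, f u = ∑ u, f u :=
  Finset.add_sum_erase _ f (Finset.mem_univ v)

private lemma aux_card_V {t : ℕ} (ht : 2 ≤ t) (m : Fin t → ℕ) (hmono : Monotone m) :
    t * m ⟨0, Nat.lt_of_lt_of_le Nat.zero_lt_two ht⟩ ≤ Fintype.card ((j : Fin t) × Fin (m j)) := by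
  rw [Fintype.card_sigma]
  simp only [Fintype.card_fin]
  have := Finset.card_nsmul_le_sum Finset.univ m (m ⟨0, Nat.lt_of_lt_of_le Nat.zero_lt_two ht⟩)
    (fun j _ => hmono (by simp [Fin.le_def]))
  simpa using this

/-- Roman domination number of a complete `t`-partite graph `K_{m₁,…,m_t}`
with `1 ≤ m₁ ≤ ⋯ ≤ m_t` and `t ≥ 2`. -/
theorem roman_domination_complete_multipartite
    {t : ℕ} (ht : 2 ≤ t) (m : Fin t → ℕ) (hpos : ∀ j, 1 ≤ m j)
    (hmono : Monotone m) :
    (m ⟨0, by omega⟩ = 1 →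
      romanDominationNumber (completeMultipartiteGraph (fun j => Fin (m j))) = 2) ∧
    (m ⟨0, by omega⟩ = 2 →
      romanDominationNumber (completeMultipartiteGraph (fun j => Fin (m j))) = 3) ∧
    (3 ≤ m ⟨0, by omega⟩ →
      romanDominationNumber (completeMultipartiteGraph (fun j => Fin (m j))) = 4) := by
  set G := completeMultipartiteGraph (fun j => Fin (m j)) with hG
  have hadj : ∀ v w : (j : Fin t) × Fin (m j), G.Adj v w ↔ v.1 ≠ w.1 := by
    intro v w; simp [hG]
  have h0t : (0 : ℕ) < t := by omega
  have h1t : (1 : ℕ) < t := by omega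
  have hcard := aux_card_V ht m hmono
  have hm0 : 0 < m ⟨0, h0t⟩ := hpos _
  have hm1 : 0 < m ⟨1, h1t⟩ := hpos _
  have hmge : ∀ j : Fin t, m ⟨0, h0t⟩ ≤ m j := fun j => hmono (by simp [Fin.le_def])
  have hno2 : ∀ f : (j : Fin t) × Fin (m j) → ℕ,
      (∀ v, f v = 0 → ∃ u, G.Adj v u ∧ f u = 2) → (¬ ∃ v, f v = 2) →
      t * m ⟨0, h0t⟩ ≤ ∑ v, f v := by
    intro f hdom hex
    push_neg at hex
    have h1 : ∀ v, 1 ≤ f v := by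
      intro v
      rcases Nat.eq_zero_or_pos (f v) with h | h
      · obtain ⟨u, _, hu2⟩ := hdom v h
        exact absurd hu2 (hex u)
      · exact h
    exact le_trans hcard (aux_card_le_sum f h1)
  refine ⟨?_, ?_, ?_⟩
  · -- m₀ = 1
    intro hm
    set v₀ : (j : Fin t) × Fin (m j) := ⟨⟨0, h0t⟩, ⟨0, hm0⟩⟩ with hv₀
    have hmem : (2 : ℕ) ∈ {w | ∃ f : (j : Fin t) × Fin (m j) → ℕ, (∀ v, f v ≤ 2) ∧
        (∀ v, f v = 0 → ∃ u, G.Adj v u ∧ f u = 2) ∧ w = ∑ v, f v} := by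
      refine ⟨fun v => if v = v₀ then 2 else 0, fun v => by show (if v = v₀ then 2 else 0) ≤ 2; split <;> omega, ?_, ?_⟩
      · intro v hv
        refine ⟨v₀, ?_, by simp⟩
        rw [hadj]
        intro hfst
        apply absurd hv
        have hveq : v = v₀ := by
          obtain ⟨j, a⟩ := v
          have hj : j = ⟨0, h0t⟩ := hfst
          subst hj
          have ha : a = ⟨0, hm0⟩ := by
            ext
            have := a.isLt
            omega
          rw [ha]
        simp [hveq]
      · simp
    refine le_antisymm (Nat.sInf_le hmem) (le_csInf ⟨_, hmem⟩ ?_)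
    rintro w ⟨f, h2, hdom, rfl⟩
    by_cases hex : ∃ v, f v = 2
    · obtain ⟨v, hv⟩ := hex
      exact aux_one_two f hv
    · have hmul : 2 * 1 ≤ t * m ⟨0, h0t⟩ := Nat.mul_le_mul ht (by omega)
      have := hno2 f hdom hex
      omega
  · -- m₀ = 2
    intro hm
    have hm2 : m ⟨0, h0t⟩ = 2 := hm
    have hm0' : 1 < m ⟨0, h0t⟩ := by omega
    set v₀ : (j : Fin t) × Fin (m j) := ⟨⟨0, h0t⟩, ⟨0, hm0⟩⟩ with hv₀
    set v₁ : (j : Fin t) × Fin (m j) := ⟨⟨0, h0t⟩, ⟨1, hm0'⟩⟩ with hv₁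
    have hne : v₀ ≠ v₁ := by simp [hv₀, hv₁, Fin.ext_iff]
    have hmem : (3 : ℕ) ∈ {w | ∃ f : (j : Fin t) × Fin (m j) → ℕ, (∀ v, f v ≤ 2) ∧
        (∀ v, f v = 0 → ∃ u, G.Adj v u ∧ f u = 2) ∧ w = ∑ v, f v} := by
      refine ⟨fun v => (if v = v₀ then 2 else 0) + (if v = v₁ then 1 else 0),
        fun v => by
          show (if v = v₀ then 2 else 0) + (if v = v₁ then 1 else 0) ≤ 2
          rcases eq_or_ne v v₀ with h | h
          · have hne' : v ≠ v₁ := by rw [h]; exact hne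
            simp [h, hne']
            exact hne
          · simp [h]; split <;> omega, ?_, ?_⟩
      · intro v hv
        have hv0 : v ≠ v₀ := by intro h; subst h; simp [hne] at hv
        have hv1 : v ≠ v₁ := by intro h; subst h; simp [hne.symm] at hv
        refine ⟨v₀, ?_, by simp [hne]⟩
        rw [hadj]
        intro hfst
        obtain ⟨j, a⟩ := v
        have hj : j = ⟨0, h0t⟩ := hfst
        subst hj
        have := a.isLt
        rcases (by omega : a.val = 0 ∨ a.val = 1) with h | h
        · exact hv0 (by simp [hv₀, Fin.ext_iff, h])
        · exact hv1 (by simp [hv₁, Fin.ext_iff, h])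
      · rw [Finset.sum_add_distrib]
        simp [hne]
    refine le_antisymm (Nat.sInf_le hmem) (le_csInf ⟨_, hmem⟩ ?_)
    rintro w ⟨f, h2, hdom, rfl⟩
    by_contra hlt
    push_neg at hlt
    have hsum : ∑ v, f v ≤ 2 := by omega
    by_cases hex : ∃ v, f v = 2
    · obtain ⟨⟨j, a⟩, hv⟩ := hex
      have hesum := aux_erase_sum f ⟨j, a⟩
      have herase : ∀ u ∈ Finset.univ.erase (⟨j, a⟩ : (j : Fin t) × Fin (m j)), f u = 0 := by
        rw [← Finset.sum_eq_zero_iff]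
        omega
      have hmj : 2 ≤ m j := hm2 ▸ hmge j
      have hnonempty : (Finset.univ.erase a).Nonempty := by
        rw [← Finset.card_pos, Finset.card_erase_of_mem (Finset.mem_univ _)]
        simp
        omega
      obtain ⟨b, hb⟩ := hnonempty
      have hab : b ≠ a := (Finset.mem_erase.mp hb).1
      have hu : (⟨j, b⟩ : (j : Fin t) × Fin (m j)) ≠ ⟨j, a⟩ := by
        simp [hab]
      have hfu : f ⟨j, b⟩ = 0 :=
        herase _ (Finset.mem_erase.mpr ⟨hu, Finset.mem_univ _⟩)
      obtain ⟨x, hxadj, hx2⟩ := hdom _ hfu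
      rw [hadj] at hxadj
      have hxv : x ≠ ⟨j, a⟩ := by
        intro h
        subst h
        exact hxadj rfl
      have : f x = 0 := herase _ (Finset.mem_erase.mpr ⟨hxv, Finset.mem_univ _⟩)
      omega
    · have hmul : 2 * 2 ≤ t * m ⟨0, h0t⟩ := Nat.mul_le_mul ht (by omega)
      have := hno2 f hdom hex
      omega
  · -- m₀ ≥ 3
    intro hm
    have hm3 : 3 ≤ m ⟨0, h0t⟩ := hm
    set v₀ : (j : Fin t) × Fin (m j) := ⟨⟨0, h0t⟩, ⟨0, hm0⟩⟩ with hv₀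
    set v₁ : (j : Fin t) × Fin (m j) := ⟨⟨1, h1t⟩, ⟨0, hm1⟩⟩ with hv₁
    have hne : v₀ ≠ v₁ := by simp [hv₀, hv₁, Fin.ext_iff]
    have hmem : (4 : ℕ) ∈ {w | ∃ f : (j : Fin t) × Fin (m j) → ℕ, (∀ v, f v ≤ 2) ∧
        (∀ v, f v = 0 → ∃ u, G.Adj v u ∧ f u = 2) ∧ w = ∑ v, f v} := by
      refine ⟨fun v => (if v = v₀ then 2 else 0) + (if v = v₁ then 2 else 0),
        fun v => by
          rcases eq_or_ne v v₀ with h | h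
          · subst h; simp [hne]
          · rcases eq_or_ne v v₁ with h' | h'
            · subst h'; simp [hne.symm]
            · simp [h, h'], ?_, ?_⟩
      · intro v hv
        by_cases hfst : v.1 = ⟨0, h0t⟩
        · refine ⟨v₁, ?_, by simp [hne.symm]⟩
          rw [hadj, hfst, hv₁]
          simp [Fin.ext_iff]
        · refine ⟨v₀, ?_, by simp [hne]⟩
          rw [hadj]
          exact hfst
      · rw [Finset.sum_add_distrib]
        simp [hne]
    refine le_antisymm (Nat.sInf_le hmem) (le_csInf ⟨_, hmem⟩ ?_)
    rintro w ⟨f, h2, hdom, rfl⟩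
    by_contra hlt
    push_neg at hlt
    have hsum : ∑ v, f v ≤ 3 := by omega
    by_cases hex : ∃ v, f v = 2
    · obtain ⟨⟨j, a⟩, hv⟩ := hex
      have hesum := aux_erase_sum f ⟨j, a⟩
      have herase1 : ∑ u ∈ Finset.univ.erase (⟨j, a⟩ : (j : Fin t) × Fin (m j)), f u ≤ 1 := by
        omega
      have hmj : 3 ≤ m j := le_trans hm3 (hmge j)
      have hcard2 : 1 < (Finset.univ.erase a).card := by
        rw [Finset.card_erase_of_mem (Finset.mem_univ _)]
        simp
        omega
      obtain ⟨b, hb, c, hc, hbc⟩ := Finset.one_lt_card.mp hcard2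
      have hab : b ≠ a := (Finset.mem_erase.mp hb).1
      have hac : c ≠ a := (Finset.mem_erase.mp hc).1
      have hub : (⟨j, b⟩ : (j : Fin t) × Fin (m j)) ≠ ⟨j, a⟩ := by simp [hab]
      have huc : (⟨j, c⟩ : (j : Fin t) × Fin (m j)) ≠ ⟨j, a⟩ := by simp [hac]
      have hubc : (⟨j, b⟩ : (j : Fin t) × Fin (m j)) ≠ ⟨j, c⟩ := by simp [hbc]
      have hpair : f ⟨j, b⟩ + f ⟨j, c⟩ ≤
          ∑ u ∈ Finset.univ.erase (⟨j, a⟩ : (j : Fin t) × Fin (m j)), f u := by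
        calc f ⟨j, b⟩ + f ⟨j, c⟩
            = ∑ u ∈ ({⟨j, b⟩, ⟨j, c⟩} : Finset ((j : Fin t) × Fin (m j))), f u :=
              (Finset.sum_pair hubc).symm
          _ ≤ _ := Finset.sum_le_sum_of_subset (by
              intro x hx
              simp only [Finset.mem_insert, Finset.mem_singleton] at hx
              rcases hx with rfl | rfl
              · exact Finset.mem_erase.mpr ⟨hub, Finset.mem_univ _⟩
              · exact Finset.mem_erase.mpr ⟨huc, Finset.mem_univ _⟩)
      have hzero : f ⟨j, b⟩ = 0 ∨ f ⟨j, c⟩ = 0 := by omega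
      have hfinal : ∀ d : Fin (m j), d ≠ a → f ⟨j, d⟩ = 0 → False := by
        intro d hda hfd
        obtain ⟨x, hxadj, hx2⟩ := hdom _ hfd
        rw [hadj] at hxadj
        have hxv : x ≠ ⟨j, a⟩ := by
          intro h
          subst h
          exact hxadj rfl
        have := aux_two_twos f (Ne.symm hxv) hv hx2
        omega
      rcases hzero with h | h
      · exact hfinal b hab h
      · exact hfinal c hac h
    · have hmul : 2 * 3 ≤ t * m ⟨0, h0t⟩ := Nat.mul_le_mul ht hm3
      have := hno2 f hdom hex
      omega
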